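/- Let ρ_max = I/d be the maximally mixed state on a d-dimensional space. Then for any Hermitian matrices A, B, V_{ρ_max}(A)·V_{ρ_max}(B) ≥ (1/d²)·‖[A,B]‖_op², where ‖·‖_op is the operator norm. -/

import Mathlib

open Matrix

section Aux

lemma mmUR_eig_apply {d : ℕ} {X : Matrix (Fin d) (Fin d) ℂ} (hX : X.IsHermitian) (a : ℝ)
    (j : Fin d) :
    Matrix.toEuclideanCLM (n := Fin d) (𝕜 := ℂ) (X - (a : ℂ) • 1) (hX.eigenvectorBasis j)
      = ((hX.eigenvalues j - a : ℝ) : ℂ) • hX.eigenvectorBasis j := by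
  have h1 : Matrix.toEuclideanCLM (n := Fin d) (𝕜 := ℂ) X (hX.eigenvectorBasis j)
      = ((hX.eigenvalues j : ℝ) : ℂ) • hX.eigenvectorBasis j := by
    apply (WithLp.equiv 2 (Fin d → ℂ)).injective
    rw [WithLp.equiv_apply, ofLp_toEuclideanCLM]
    ext i
    have h2 : (X *ᵥ ⇑(hX.eigenvectorBasis j)) i
        = (hX.eigenvalues j • ⇑(hX.eigenvectorBasis j)) i := by
      rw [hX.mulVec_eigenvectorBasis j]
    simpa [Matrix.toLin'_apply, Complex.real_smul] using h2
  rw [map_sub, _root_.map_smul, _root_.map_one]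
  simp only [ContinuousLinearMap.sub_apply, ContinuousLinearMap.smul_apply,
    ContinuousLinearMap.one_apply, h1]
  push_cast
  rw [sub_smul]

lemma mmUR_shift_norm_le {d : ℕ} {X : Matrix (Fin d) (Fin d) ℂ} (hX : X.IsHermitian)
    {a c : ℝ} (hc : 0 ≤ c) (h : ∀ i, |hX.eigenvalues i - a| ≤ c) :
    ‖Matrix.toEuclideanCLM (n := Fin d) (𝕜 := ℂ) (X - (a : ℂ) • 1)‖ ≤ c := by
  set b := hX.eigenvectorBasis
  set T := Matrix.toEuclideanCLM (n := Fin d) (𝕜 := ℂ) (X - (a : ℂ) • 1)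
  apply ContinuousLinearMap.opNorm_le_bound _ hc
  intro v
  have hv : T v = ∑ j, ((((hX.eigenvalues j - a : ℝ)) : ℂ) * b.repr v j) • b j := by
    conv_lhs => rw [← b.sum_repr v, map_sum]
    refine Finset.sum_congr rfl fun j _ => ?_
    rw [T.map_smul, mmUR_eig_apply hX a j, smul_smul, mul_comm]
  have hrepr : ∀ i, b.repr (T v) i = (((hX.eigenvalues i - a : ℝ)) : ℂ) * b.repr v i := by
    intro i
    rw [b.repr_apply_apply, hv, b.orthonormal.inner_right_fintype]
  have h1 : ‖T v‖ = ‖b.repr (T v)‖ := (b.repr.norm_map _).symm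
  have h2 : ‖v‖ = ‖b.repr v‖ := (b.repr.norm_map _).symm
  rw [h1, h2, EuclideanSpace.norm_eq, EuclideanSpace.norm_eq]
  rw [← Real.sqrt_sq hc, ← Real.sqrt_mul (by positivity)]
  apply Real.sqrt_le_sqrt
  rw [Finset.mul_sum]
  apply Finset.sum_le_sum
  intro i _
  rw [hrepr i, norm_mul]
  have hle : ‖(((hX.eigenvalues i - a : ℝ)) : ℂ)‖ ≤ c := by
    rw [Complex.norm_real, Real.norm_eq_abs]; exact h i
  calc (‖(((hX.eigenvalues i - a : ℝ)) : ℂ)‖ * ‖b.repr v i‖)^2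
      = ‖(((hX.eigenvalues i - a : ℝ)) : ℂ)‖^2 * ‖b.repr v i‖^2 := by ring
    _ ≤ c^2 * ‖b.repr v i‖^2 := by
        apply mul_le_mul_of_nonneg_right _ (by positivity)
        exact pow_le_pow_left₀ (norm_nonneg _) hle 2

lemma mmUR_trace_eq {d : ℕ} (A : Matrix (Fin d) (Fin d) ℂ) (hA : A.IsHermitian) :
    A.trace = ∑ i, (hA.eigenvalues i : ℂ) := by
  conv_lhs => rw [hA.spectral_theorem, Unitary.conjStarAlgAut_apply]
  rw [trace_mul_cycle]
  rw [show (star (hA.eigenvectorUnitary : Matrix (Fin d) (Fin d) ℂ))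
      * (hA.eigenvectorUnitary : Matrix (Fin d) (Fin d) ℂ) = 1 from Unitary.coe_star_mul_self _]
  simp [trace_diagonal]

lemma mmUR_trace_sq_eq {d : ℕ} (A : Matrix (Fin d) (Fin d) ℂ) (hA : A.IsHermitian) :
    (A * A).trace = ∑ i, ((hA.eigenvalues i : ℂ))^2 := by
  have hU : (star (hA.eigenvectorUnitary : Matrix (Fin d) (Fin d) ℂ))
      * (hA.eigenvectorUnitary : Matrix (Fin d) (Fin d) ℂ) = 1 := Unitary.coe_star_mul_self _
  conv_lhs => rw [hA.spectral_theorem, Unitary.conjStarAlgAut_apply]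
  set U : Matrix (Fin d) (Fin d) ℂ := (hA.eigenvectorUnitary : Matrix (Fin d) (Fin d) ℂ)
  set D : Matrix (Fin d) (Fin d) ℂ := diagonal (RCLike.ofReal ∘ hA.eigenvalues)
  have hUD : (U * D * star U) * (U * D * star U) = U * (D * D) * star U := by
    rw [mul_assoc (U * D) (star U) _, ← mul_assoc (star U) (U * D) _,
      ← mul_assoc (star U) U D, hU, one_mul]
    noncomm_ring
  rw [hUD, trace_mul_cycle, ← mul_assoc, hU, one_mul]
  simp [D, diagonal_mul_diagonal, trace_diagonal, sq]

lemma mmUR_var_bound {d : ℕ} (hd : 0 < d) (e : Fin d → ℝ) (i0 i1 : Fin d) :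
    (e i0 - e i1)^2 / (2*d) ≤ (1/(d:ℝ)) * (∑ i, (e i)^2) - ((1/(d:ℝ)) * ∑ i, e i)^2 := by
  have hd' : (0:ℝ) < d := by exact_mod_cast hd
  set m : ℝ := (∑ i, e i) / d with hm
  have hkey : (1/(d:ℝ)) * (∑ i, (e i)^2) - ((1/(d:ℝ)) * ∑ i, e i)^2
      = (1/(d:ℝ)) * ∑ i, (e i - m)^2 := by
    have hexp : ∑ i, (e i - m)^2 = (∑ i, (e i)^2) - 2*m*(∑ i, e i) + d * m^2 := by
      have h1 : ∀ i ∈ Finset.univ, (e i - m)^2 = (e i)^2 - 2*m*(e i) + m^2 :=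
        fun i _ => by ring
      rw [Finset.sum_congr rfl h1]
      rw [Finset.sum_add_distrib, Finset.sum_sub_distrib, ← Finset.mul_sum, Finset.sum_const]
      simp [Finset.card_univ, nsmul_eq_mul]
    rw [hexp, hm]
    field_simp
    ring
  rw [hkey]
  by_cases hii : i0 = i1
  · rw [hii, sub_self]
    have h0 : (0:ℝ)^2 / (2*(d:ℝ)) = 0 := by norm_num
    rw [h0]
    positivity
  · have hsub : (e i0 - m)^2 + (e i1 - m)^2 ≤ ∑ i, (e i - m)^2 := by
      have := Finset.sum_le_sum_of_subset_of_nonneg (f := fun i => (e i - m)^2)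
        (Finset.subset_univ ({i0, i1} : Finset (Fin d)))
        (fun i _ _ => by positivity)
      rwa [Finset.sum_pair hii] at this
    have hpair : (e i0 - e i1)^2 / 2 ≤ (e i0 - m)^2 + (e i1 - m)^2 := by
      nlinarith [sq_nonneg (e i0 + e i1 - 2*m)]
    calc (e i0 - e i1)^2 / (2*d) = (1/(d:ℝ)) * ((e i0 - e i1)^2/2) := by
          rw [mul_comm (2:ℝ) (d:ℝ), ← div_div]; ring
      _ ≤ (1/(d:ℝ)) * ((e i0 - m)^2 + (e i1 - m)^2) := by
          apply mul_le_mul_of_nonneg_left hpair (by positivity)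
      _ ≤ (1/(d:ℝ)) * ∑ i, (e i - m)^2 := by
          apply mul_le_mul_of_nonneg_left hsub (by positivity)

end Aux

/-- Uncertainty relation for the maximally mixed state, with the operator norm
of the commutator. -/
theorem maximally_mixed_UR {d : ℕ} (hd : 0 < d)
    (A B : Matrix (Fin d) (Fin d) ℂ)
    (hA : A.IsHermitian) (hB : B.IsHermitian) :
    (((1 / (d : ℝ)) • (1 : Matrix (Fin d) (Fin d) ℂ) * A * A).trace.re -
        (((1 / (d : ℝ)) • (1 : Matrix (Fin d) (Fin d) ℂ) * A).trace.re) ^ 2) *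
      (((1 / (d : ℝ)) • (1 : Matrix (Fin d) (Fin d) ℂ) * B * B).trace.re -
        (((1 / (d : ℝ)) • (1 : Matrix (Fin d) (Fin d) ℂ) * B).trace.re) ^ 2) ≥
    (1 / (d : ℝ) ^ 2) * ‖Matrix.toEuclideanCLM (𝕜 := ℂ) (A * B - B * A)‖ ^ 2 := by
  have hd' : (0:ℝ) < d := by exact_mod_cast hd
  set e := hA.eigenvalues with he
  set f := hB.eigenvalues with hf
  -- rewrite the traces
  have hsmul : ∀ (M : Matrix (Fin d) (Fin d) ℂ),
      (((1 / (d : ℝ)) • (1 : Matrix (Fin d) (Fin d) ℂ)) * M).trace.re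
        = (1/(d:ℝ)) * M.trace.re := by
    intro M
    rw [smul_mul_assoc, one_mul, trace_smul]
    simp [Complex.real_smul]
  have hVA : ((1 / (d : ℝ)) • (1 : Matrix (Fin d) (Fin d) ℂ) * A * A).trace.re -
      (((1 / (d : ℝ)) • (1 : Matrix (Fin d) (Fin d) ℂ) * A).trace.re) ^ 2
      = (1/(d:ℝ)) * (∑ i, (e i)^2) - ((1/(d:ℝ)) * ∑ i, e i)^2 := by
    rw [mul_assoc, hsmul (A * A), hsmul A, mmUR_trace_eq A hA, mmUR_trace_sq_eq A hA,
      show (∑ i, ((hA.eigenvalues i : ℂ))^2) = (((∑ i, (hA.eigenvalues i)^2 : ℝ)) : ℂ) from by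
        push_cast; ring,
      show (∑ i, ((hA.eigenvalues i : ℂ))) = (((∑ i, hA.eigenvalues i : ℝ)) : ℂ) from by
        push_cast; ring,
      Complex.ofReal_re, Complex.ofReal_re]
  have hVB : ((1 / (d : ℝ)) • (1 : Matrix (Fin d) (Fin d) ℂ) * B * B).trace.re -
      (((1 / (d : ℝ)) • (1 : Matrix (Fin d) (Fin d) ℂ) * B).trace.re) ^ 2
      = (1/(d:ℝ)) * (∑ i, (f i)^2) - ((1/(d:ℝ)) * ∑ i, f i)^2 := by
    rw [mul_assoc, hsmul (B * B), hsmul B, mmUR_trace_eq B hB, mmUR_trace_sq_eq B hB,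
      show (∑ i, ((hB.eigenvalues i : ℂ))^2) = (((∑ i, (hB.eigenvalues i)^2 : ℝ)) : ℂ) from by
        push_cast; ring,
      show (∑ i, ((hB.eigenvalues i : ℂ))) = (((∑ i, hB.eigenvalues i : ℝ)) : ℂ) from by
        push_cast; ring,
      Complex.ofReal_re, Complex.ofReal_re]
  rw [hVA, hVB]
  -- extremal eigenvalues
  have hne : (Finset.univ : Finset (Fin d)).Nonempty := ⟨⟨0, hd⟩, Finset.mem_univ _⟩
  obtain ⟨iM, -, hiM⟩ := Finset.exists_max_image Finset.univ e hne
  obtain ⟨im, -, him⟩ := Finset.exists_min_image Finset.univ e hne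
  obtain ⟨jM, -, hjM⟩ := Finset.exists_max_image Finset.univ f hne
  obtain ⟨jm, -, hjm⟩ := Finset.exists_min_image Finset.univ f hne
  set aA : ℝ := (e iM + e im)/2
  set cA : ℝ := (e iM - e im)/2
  set aB : ℝ := (f jM + f jm)/2
  set cB : ℝ := (f jM - f jm)/2
  have hcA : 0 ≤ cA := by
    have := him iM (Finset.mem_univ _); simp only [cA]; linarith
  have hcB : 0 ≤ cB := by
    have := hjm jM (Finset.mem_univ _); simp only [cB]; linarith
  have hNA : ‖Matrix.toEuclideanCLM (n := Fin d) (𝕜 := ℂ) (A - (aA : ℂ) • 1)‖ ≤ cA := by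
    apply mmUR_shift_norm_le hA hcA
    intro i
    have h1 := hiM i (Finset.mem_univ _)
    have h2 := him i (Finset.mem_univ _)
    rw [abs_le]
    constructor <;> (simp only [aA, cA, ← he]; linarith)
  have hNB : ‖Matrix.toEuclideanCLM (n := Fin d) (𝕜 := ℂ) (B - (aB : ℂ) • 1)‖ ≤ cB := by
    apply mmUR_shift_norm_le hB hcB
    intro i
    have h1 := hjM i (Finset.mem_univ _)
    have h2 := hjm i (Finset.mem_univ _)
    rw [abs_le]
    constructor <;> (simp only [aB, cB, ← hf]; linarith)
  -- commutator is shift-invariant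
  have hcomm : A * B - B * A = (A - (aA : ℂ) • 1) * (B - (aB : ℂ) • 1)
      - (B - (aB : ℂ) • 1) * (A - (aA : ℂ) • 1) := by
    simp only [mul_sub, sub_mul, smul_mul_assoc, mul_smul_comm, one_mul, mul_one,
      smul_sub, smul_smul, mul_comm ((aB : ℂ)) ((aA : ℂ))]
    abel
  have hC : ‖Matrix.toEuclideanCLM (n := Fin d) (𝕜 := ℂ) (A * B - B * A)‖ ≤ 2 * cA * cB := by
    rw [hcomm, map_sub, _root_.map_mul, _root_.map_mul]
    refine le_trans (norm_sub_le _ _) ?_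
    have h1 := norm_mul_le (Matrix.toEuclideanCLM (n := Fin d) (𝕜 := ℂ) (A - (aA : ℂ) • 1))
      (Matrix.toEuclideanCLM (n := Fin d) (𝕜 := ℂ) (B - (aB : ℂ) • 1))
    have h2 := norm_mul_le (Matrix.toEuclideanCLM (n := Fin d) (𝕜 := ℂ) (B - (aB : ℂ) • 1))
      (Matrix.toEuclideanCLM (n := Fin d) (𝕜 := ℂ) (A - (aA : ℂ) • 1))
    have h3 : ‖Matrix.toEuclideanCLM (n := Fin d) (𝕜 := ℂ) (A - (aA : ℂ) • 1)‖
        * ‖Matrix.toEuclideanCLM (n := Fin d) (𝕜 := ℂ) (B - (aB : ℂ) • 1)‖ ≤ cA * cB :=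
      mul_le_mul hNA hNB (norm_nonneg _) hcA
    nlinarith [norm_nonneg (Matrix.toEuclideanCLM (n := Fin d) (𝕜 := ℂ) (A - (aA : ℂ) • 1)),
      norm_nonneg (Matrix.toEuclideanCLM (n := Fin d) (𝕜 := ℂ) (B - (aB : ℂ) • 1))]
  -- variance lower bounds
  have hvA : 2 * cA^2 / d ≤ (1/(d:ℝ)) * (∑ i, (e i)^2) - ((1/(d:ℝ)) * ∑ i, e i)^2 := by
    have h1 := mmUR_var_bound hd e iM im
    have heq : (e iM - e im)^2 / (2*(d:ℝ)) = 2 * cA^2 / d := by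
      simp only [cA]; rw [div_pow]; field_simp
    linarith [h1, heq]
  have hvB : 2 * cB^2 / d ≤ (1/(d:ℝ)) * (∑ i, (f i)^2) - ((1/(d:ℝ)) * ∑ i, f i)^2 := by
    have h1 := mmUR_var_bound hd f jM jm
    have heq : (f jM - f jm)^2 / (2*(d:ℝ)) = 2 * cB^2 / d := by
      simp only [cB]; rw [div_pow]; field_simp
    linarith [h1, heq]
  -- assemble
  have hCsq : ‖Matrix.toEuclideanCLM (n := Fin d) (𝕜 := ℂ) (A * B - B * A)‖^2
      ≤ (2 * cA * cB)^2 := pow_le_pow_left₀ (norm_nonneg _) hC 2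
  clear_value aA cA aB cB
  calc (1 / (d : ℝ) ^ 2) * ‖Matrix.toEuclideanCLM (n := Fin d) (𝕜 := ℂ) (A * B - B * A)‖ ^ 2
      ≤ (1 / (d : ℝ) ^ 2) * (2 * cA * cB)^2 := by
        apply mul_le_mul_of_nonneg_left hCsq (by positivity)
    _ = (2 * cA^2 / d) * (2 * cB^2 / d) := by ring
    _ ≤ ((1/(d:ℝ)) * (∑ i, (e i)^2) - ((1/(d:ℝ)) * ∑ i, e i)^2)
        * ((1/(d:ℝ)) * (∑ i, (f i)^2) - ((1/(d:ℝ)) * ∑ i, f i)^2) := by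
        apply mul_le_mul hvA hvB (by positivity) (le_trans (by positivity) hvA)
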